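/- (Thompson–McEnteggert formula over commutative rings) Let R be a commutative ring with identity, A an n×n matrix over R, λ₀ ∈ R an eigenvalue of A, v a right eigenvector (Av = λ₀v) and w a left eigenvector (wᵀA = λ₀wᵀ) of A for λ₀. Then (wᵀv) · Adj(λ₀I − A) = p_A'(λ₀) · v wᵀ, where p_A(λ) = det(λI − A) is the characteristic polynomial and p_A' is its formal derivative. -/

import Mathlib

open Matrix Polynomial

/-- If `wᵀ B = 0`, then the rows of `adj B` are proportional to `w`
in the strong (2×2 minors) sense. -/
lemma adjugate_row_prop {R : Type*} [CommRing R] {n : ℕ}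
    (B : Matrix (Fin n) (Fin n) R) (w : Fin n → R) (hw : B.vecMul w = 0)
    (i j k : Fin n) : w i * B.adjugate j k = w k * B.adjugate j i := by
  rcases eq_or_ne i k with rfl | hik
  · rfl
  have hsum : (∑ l, w l • B l) = 0 := by
    funext m
    have := congrFun hw m
    simpa [Matrix.vecMul, dotProduct, Finset.sum_apply] using this
  set M : Matrix (Fin n) (Fin n) R := B.updateRow k (Pi.single j 1) with hM
  set c : Fin n → R := fun m => if m = k then 0 else w m with hc
  have hcomb : (∑ l, c l • M l) = (-(w k)) • B k := by
    have h1 : (∑ l, c l • M l) = ∑ l ∈ Finset.univ.erase k, c l • M l :=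
      (Finset.sum_erase _ (by simp [hc])).symm
    have h1' : ∑ l ∈ Finset.univ.erase k, c l • M l
        = ∑ l ∈ Finset.univ.erase k, w l • B l := by
      refine Finset.sum_congr rfl fun l hl => ?_
      have hlk : l ≠ k := (Finset.mem_erase.mp hl).1
      simp [hc, hlk, hM, Matrix.updateRow_ne hlk]
    have h2 : ∑ l ∈ Finset.univ.erase k, w l • B l = (∑ l, w l • B l) - w k • B k :=
      Finset.sum_erase_eq_sub (Finset.mem_univ k)
    rw [h1, h1', h2, hsum, zero_sub, neg_smul]
  have hdet := Matrix.det_updateRow_sum M i c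
  rw [hcomb] at hdet
  have hcik : c i = w i := by simp [hc, hik]
  rw [hcik] at hdet
  have hswap : M.updateRow i (B k)
      = (B.updateRow i (Pi.single j 1)).submatrix (Equiv.swap i k) id := by
    ext r m
    rcases eq_or_ne r i with rfl | hri
    · simp [Matrix.updateRow_self, Matrix.submatrix_apply, Equiv.swap_apply_left,
        Matrix.updateRow_ne (Ne.symm hik)]
    rcases eq_or_ne r k with rfl | hrk
    · simp [hM, Matrix.updateRow_ne hri, Matrix.updateRow_self, Matrix.submatrix_apply,
        Equiv.swap_apply_right, Matrix.updateRow_self]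
    · simp [hM, Matrix.updateRow_ne hri, Matrix.updateRow_ne hrk, Matrix.submatrix_apply,
        Equiv.swap_apply_of_ne_of_ne hri hrk]
  have hdet2 : (M.updateRow i ((-(w k)) • B k)).det
      = (-(w k)) * ((B.updateRow i (Pi.single j 1)).det) * (-1) := by
    rw [Matrix.det_updateRow_smul, hswap, Matrix.det_permute,
      Equiv.Perm.sign_swap hik]
    push_cast
    ring
  rw [hdet2] at hdet
  rw [Matrix.adjugate_apply, Matrix.adjugate_apply]
  rw [smul_eq_mul] at hdet
  rw [← hM]
  linear_combination -hdet

/-- `adj(λ₀ I − A) v = p_A'(λ₀) v` for a right eigenvector `v`. -/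
lemma adjugate_mulVec_eigen {R : Type*} [CommRing R] {n : ℕ}
    (A : Matrix (Fin n) (Fin n) R) (lam0 : R) (v : Fin n → R)
    (hAv : A.mulVec v = lam0 • v) :
    (lam0 • (1 : Matrix (Fin n) (Fin n) R) - A).adjugate.mulVec v
      = ((Polynomial.derivative A.charpoly).eval lam0) • v := by
  set B : Matrix (Fin n) (Fin n) R := lam0 • (1 : Matrix (Fin n) (Fin n) R) - A with hB
  have hBv : B.mulVec v = 0 := by
    rw [hB, Matrix.sub_mulVec, hAv, Matrix.smul_mulVec, Matrix.one_mulVec, sub_self]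
  set ev : R[X] →+* R := Polynomial.evalRingHom lam0 with hev
  have hevchar : ∀ j k, (charmatrix A j k).eval lam0 = B j k := by
    intro j k
    rcases eq_or_ne j k with rfl | hjk
    · simp [hB, Matrix.charmatrix_apply_eq, Matrix.one_apply, Matrix.smul_apply,
        Matrix.sub_apply]
    · simp [hB, Matrix.charmatrix_apply_ne _ _ _ hjk, Matrix.one_apply_ne hjk,
        Matrix.smul_apply, Matrix.sub_apply]
  have hevcharM : ev.mapMatrix (charmatrix A) = B := by
    ext j k
    simpa [hev] using hevchar j k
  have hevadj : ∀ i j, ((charmatrix A).adjugate i j).eval lam0 = B.adjugate i j := by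
    intro i j
    have := congrFun (congrFun (ev.map_adjugate (charmatrix A)) i) j
    rw [hevcharM] at this
    simpa [hev] using this
  have hdchar : ∀ j k : Fin n,
      Polynomial.derivative (charmatrix A j k) = (1 : Matrix (Fin n) (Fin n) R[X]) j k := by
    intro j k
    rcases eq_or_ne j k with rfl | hjk
    · simp
    · simp [Matrix.charmatrix_apply_ne _ _ _ hjk, Matrix.one_apply_ne hjk]
  have honeev : ∀ j k : Fin n, ((1 : Matrix (Fin n) (Fin n) R[X]) j k).eval lam0
      = (1 : Matrix (Fin n) (Fin n) R) j k := by
    intro j k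
    rcases eq_or_ne j k with rfl | hjk
    · simp
    · simp [Matrix.one_apply_ne hjk]
  set Dadj : Matrix (Fin n) (Fin n) R :=
    Matrix.of (fun i j => (Polynomial.derivative ((charmatrix A).adjugate i j)).eval lam0)
    with hDadj
  have key : Dadj * B + B.adjugate
      = ((Polynomial.derivative A.charpoly).eval lam0) • (1 : Matrix (Fin n) (Fin n) R) := by
    ext i k
    have h2 : ∑ j, (charmatrix A).adjugate i j * charmatrix A j k
        = A.charpoly * ((1 : Matrix (Fin n) (Fin n) R[X]) i k) := by
      have := congrFun (congrFun (Matrix.adjugate_mul (charmatrix A)) i) k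
      simpa [Matrix.mul_apply, Matrix.smul_apply, Matrix.charpoly] using this
    have h3 := congrArg (fun q => (Polynomial.derivative q).eval lam0) h2
    simp only [Polynomial.derivative_sum, Polynomial.derivative_mul, Polynomial.eval_finset_sum,
      Polynomial.eval_add, Polynomial.eval_mul] at h3
    have hone_deriv : Polynomial.derivative ((1 : Matrix (Fin n) (Fin n) R[X]) i k) = 0 := by
      rcases eq_or_ne i k with rfl | hik
      · simp
      · simp [Matrix.one_apply_ne hik]
    rw [hone_deriv] at h3
    simp only [hdchar, honeev, hevchar, hevadj, Polynomial.eval_zero, zero_mul, mul_zero,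
      add_zero] at h3
    -- h3 : ∑ j, (eval lam0 (derivative (adj i j)) * B j k + B.adjugate i j * (1 : Matrix) j k)
    --        = eval lam0 (derivative A.charpoly) * (1 : Matrix) i k
    have hsplit : ∑ j, ((Polynomial.derivative ((charmatrix A).adjugate i j)).eval lam0 * B j k
        + B.adjugate i j * (1 : Matrix (Fin n) (Fin n) R) j k)
        = (∑ j, (Polynomial.derivative ((charmatrix A).adjugate i j)).eval lam0 * B j k)
          + B.adjugate i k := by
      rw [Finset.sum_add_distrib]
      congr 1
      rw [Finset.sum_eq_single k]
      · simp [Matrix.one_apply]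
      · intro b _ hb
        simp [Matrix.one_apply_ne hb]
      · simp
    rw [hsplit] at h3
    simp only [Matrix.add_apply, Matrix.mul_apply, Matrix.smul_apply, smul_eq_mul,
      hDadj, Matrix.of_apply]
    exact h3
  have := congrArg (fun M : Matrix (Fin n) (Fin n) R => M.mulVec v) key
  simp only [Matrix.add_mulVec, Matrix.smul_mulVec, Matrix.one_mulVec] at this
  rw [← Matrix.mulVec_mulVec, hBv] at this
  simpa using this

/-- Thompson–McEnteggert formula over a commutative ring:
`(wᵀv) • Adj(λ₀ I − A) = p_A'(λ₀) • (v wᵀ)`. -/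
theorem thompson_mcEnteggert
    {R : Type*} [CommRing R] {n : ℕ} (A : Matrix (Fin n) (Fin n) R) (lam0 : R)
    (v w : Fin n → R) (hv : v ≠ 0) (hw : w ≠ 0)
    (hAv : A.mulVec v = lam0 • v) (hwA : A.vecMul w = lam0 • w) :
    (w ⬝ᵥ v) • (lam0 • (1 : Matrix (Fin n) (Fin n) R) - A).adjugate =
      (Polynomial.derivative A.charpoly).eval lam0 • Matrix.vecMulVec v w := by
  set B : Matrix (Fin n) (Fin n) R := lam0 • (1 : Matrix (Fin n) (Fin n) R) - A with hB
  have hwB : B.vecMul w = 0 := by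
    funext m
    have h1 : (Matrix.vecMul w (lam0 • (1 : Matrix (Fin n) (Fin n) R))) m = lam0 * w m := by
      simp [Matrix.vecMul, dotProduct, Matrix.smul_apply, Matrix.one_apply, mul_ite,
        Finset.sum_ite_eq, mul_comm]
    have h2 := congrFun hwA m
    simp only [hB, Matrix.vecMul_sub, Pi.sub_apply, h1, h2, Pi.smul_apply, smul_eq_mul,
      Pi.zero_apply]
    ring
  have hMv := adjugate_mulVec_eigen A lam0 v hAv
  rw [← hB] at hMv
  ext j k
  have hrow := fun i => adjugate_row_prop B w hwB i j k
  have hMvj := congrFun hMv j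
  simp only [Matrix.mulVec, dotProduct, Pi.smul_apply, smul_eq_mul] at hMvj
  simp only [Matrix.smul_apply, smul_eq_mul, Matrix.vecMulVec_apply, dotProduct]
  calc (∑ i, w i * v i) * B.adjugate j k
      = ∑ i, v i * (w i * B.adjugate j k) := by rw [Finset.sum_mul]; congr 1; ext i; ring
    _ = ∑ i, v i * (w k * B.adjugate j i) := by
        refine Finset.sum_congr rfl fun i _ => ?_
        rw [hrow i]
    _ = w k * ∑ i, B.adjugate j i * v i := by
        rw [Finset.mul_sum]; congr 1; ext i; ring
    _ = w k * ((Polynomial.derivative A.charpoly).eval lam0 * v j) := by rw [hMvj]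
    _ = (Polynomial.derivative A.charpoly).eval lam0 * (v j * w k) := by ring
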